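/- If S and T are finite sets of points in general position in ℝ^d with |S| = k-1 and |T| ≥ d·C(k-1, d) + 1 where k > d+1, then there exists a point p ∈ T such that S ∪ {p} is in general position. -/

import Mathlib

open Metric Finset
open scoped Classical

noncomputable section

/-- A finite set in `ℝ^d` is in general position if every subset of size at most `d+1`
is affinely independent. -/
def InGenPos (d : ℕ) (X : Finset (EuclideanSpace ℝ (Fin d))) : Prop :=
  ∀ S ⊆ X, S.card ≤ d + 1 →
    AffineIndependent ℝ (fun p : S => (p : EuclideanSpace ℝ (Fin d)))

private lemma aux_insert_ai {d : ℕ} (A : Finset (EuclideanSpace ℝ (Fin d)))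
    (p : EuclideanSpace ℝ (Fin d)) (hp : p ∉ A)
    (hA : AffineIndependent ℝ (fun x : A => (x : EuclideanSpace ℝ (Fin d))))
    (hspan : p ∉ affineSpan ℝ (A : Set (EuclideanSpace ℝ (Fin d)))) :
    AffineIndependent ℝ
      (fun x : (insert p A : Finset (EuclideanSpace ℝ (Fin d))) =>
        (x : EuclideanSpace ℝ (Fin d))) := by
  set i : (insert p A : Finset (EuclideanSpace ℝ (Fin d))) :=
    ⟨p, Finset.mem_insert_self p A⟩ with hi_def
  apply AffineIndependent.affineIndependent_of_notMem_span (i := i)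
  · have hmem : ∀ x : {y : (insert p A : Finset (EuclideanSpace ℝ (Fin d))) // y ≠ i},
        (x.1.1 : EuclideanSpace ℝ (Fin d)) ∈ A := by
      intro x
      rcases Finset.mem_insert.1 x.1.2 with h | h
      · exact absurd (Subtype.ext h) x.2
      · exact h
    have hinj : Function.Injective
        (fun x : {y : (insert p A : Finset (EuclideanSpace ℝ (Fin d))) // y ≠ i} =>
          (⟨x.1.1, hmem x⟩ : A)) := by
      intro a b hab
      have hab' : (⟨a.1.1, hmem a⟩ : A) = ⟨b.1.1, hmem b⟩ := hab
      have : (a.1.1 : EuclideanSpace ℝ (Fin d)) = b.1.1 := Subtype.mk_eq_mk.1 hab'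
      exact Subtype.ext (Subtype.ext this)
    have hc := hA.comp_embedding (⟨fun x => ⟨x.1.1, hmem x⟩, hinj⟩ :
      {y : (insert p A : Finset (EuclideanSpace ℝ (Fin d))) // y ≠ i} ↪ A)
    exact hc
  · have himg : ((fun x : (insert p A : Finset (EuclideanSpace ℝ (Fin d))) =>
        (x : EuclideanSpace ℝ (Fin d))) '' {x | x ≠ i}) = (A : Set (EuclideanSpace ℝ (Fin d))) := by
      ext y
      constructor
      · rintro ⟨x, hx, rfl⟩
        rcases Finset.mem_insert.1 x.2 with h | h
        · exact absurd (Subtype.ext h) hx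
        · exact h
      · intro hy
        refine ⟨⟨y, Finset.mem_insert_of_mem hy⟩, ?_, rfl⟩
        intro hcon
        have : y = p := congrArg Subtype.val hcon
        exact hp (this ▸ hy)
    rw [himg]
    exact hspan

private lemma aux_card_le_one_ai {d : ℕ} (A : Finset (EuclideanSpace ℝ (Fin d)))
    (h : A.card ≤ 1) :
    AffineIndependent ℝ (fun x : A => (x : EuclideanSpace ℝ (Fin d))) := by
  have : Subsingleton A := by
    rcases Finset.card_le_one_iff_subset_singleton.1 h with ⟨x, hx⟩
    constructor
    rintro ⟨a, ha⟩ ⟨b, hb⟩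
    have ha' := Finset.mem_singleton.1 (hx ha)
    have hb' := Finset.mem_singleton.1 (hx hb)
    exact Subtype.ext (ha'.trans hb'.symm)
  exact affineIndependent_of_subsingleton ℝ _

/-- If `S` and `T` are in general position in `ℝ^d`, `|S| = k-1`, `k > d+1`, and
`|T| ≥ d·C(k-1,d) + 1`, then some `p ∈ T` has `S ∪ {p}` in general position. -/
theorem stmt0 (d k : ℕ) (hk : d + 1 < k)
    (S T : Finset (EuclideanSpace ℝ (Fin d)))
    (hS : InGenPos d S) (hT : InGenPos d T)
    (hScard : S.card = k - 1)
    (hTcard : d * Nat.choose (k - 1) d + 1 ≤ T.card) :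
    ∃ p ∈ T, InGenPos d (insert p S) := by
  rcases Nat.eq_zero_or_pos d with hd | hd
  · -- d = 0 : trivial
    subst hd
    have hTne : T.Nonempty := Finset.card_pos.1 (by omega)
    obtain ⟨p, hp⟩ := hTne
    refine ⟨p, hp, ?_⟩
    intro A _ hcard
    exact aux_card_le_one_ai A hcard
  -- d ≥ 1
  have hSd : d + 1 ≤ S.card := by omega
  -- The bad set
  set 𝒜 := S.powersetCard d with h𝒜
  set Bad := T.filter (fun p => ∃ A ∈ 𝒜, p ∈ affineSpan ℝ (A : Set (EuclideanSpace ℝ (Fin d))))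
    with hBad
  -- per-A bound
  have hper : ∀ A ∈ 𝒜, (T.filter
      (fun p => p ∈ affineSpan ℝ (A : Set (EuclideanSpace ℝ (Fin d))))).card ≤ d := by
    intro A hA
    rw [Finset.mem_powersetCard] at hA
    obtain ⟨hAS, hAcard⟩ := hA
    by_contra hcon
    push_neg at hcon
    obtain ⟨U, hUsub, hUcard⟩ := Finset.exists_subset_card_eq (n := d + 1) hcon
    have hUT : U ⊆ T := hUsub.trans (Finset.filter_subset _ _)
    have hUAI : AffineIndependent ℝ (fun x : U => (x : EuclideanSpace ℝ (Fin d))) :=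
      hT U hUT (le_of_eq hUcard)
    have hUrank : Module.finrank ℝ
        (vectorSpan ℝ (Set.range (fun x : U => (x : EuclideanSpace ℝ (Fin d))))) = d := by
      apply hUAI.finrank_vectorSpan
      rw [Fintype.card_coe, hUcard]
    have hrange : Set.range (fun x : U => (x : EuclideanSpace ℝ (Fin d)))
        = (U : Set (EuclideanSpace ℝ (Fin d))) := Subtype.range_coe
    rw [hrange] at hUrank
    -- U ⊆ affineSpan A
    have hUspan : (U : Set (EuclideanSpace ℝ (Fin d))) ⊆
        (affineSpan ℝ (A : Set (EuclideanSpace ℝ (Fin d))) : Set (EuclideanSpace ℝ (Fin d))) := by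
      intro x hx
      exact (Finset.mem_filter.1 (hUsub hx)).2
    have hle : vectorSpan ℝ ((U : Set (EuclideanSpace ℝ (Fin d)))) ≤
        vectorSpan ℝ ((A : Set (EuclideanSpace ℝ (Fin d)))) := by
      have h1 : affineSpan ℝ ((U : Set (EuclideanSpace ℝ (Fin d)))) ≤
          affineSpan ℝ ((A : Set (EuclideanSpace ℝ (Fin d)))) := affineSpan_le.2 hUspan
      have h2 := AffineSubspace.direction_le h1
      rwa [direction_affineSpan, direction_affineSpan] at h2
    have hArank : Module.finrank ℝ
        (vectorSpan ℝ ((A : Set (EuclideanSpace ℝ (Fin d))))) ≤ d - 1 := by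
      have := finrank_vectorSpan_image_finset_le ℝ (id : EuclideanSpace ℝ (Fin d) →
        EuclideanSpace ℝ (Fin d)) A (n := d - 1) (by omega)
      rw [Finset.image_id] at this
      simpa using this
    have := Submodule.finrank_mono hle
    omega
  -- bound on Bad
  have hBadcard : Bad.card ≤ d * Nat.choose (k - 1) d := by
    have hsub : Bad ⊆ 𝒜.biUnion (fun A => T.filter
        (fun p => p ∈ affineSpan ℝ (A : Set (EuclideanSpace ℝ (Fin d))))) := by
      intro p hp
      rw [hBad, Finset.mem_filter] at hp
      obtain ⟨hpT, A, hA𝒜, hpA⟩ := hp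
      exact Finset.mem_biUnion.2 ⟨A, hA𝒜, Finset.mem_filter.2 ⟨hpT, hpA⟩⟩
    calc Bad.card ≤ (𝒜.biUnion (fun A => T.filter
          (fun p => p ∈ affineSpan ℝ (A : Set (EuclideanSpace ℝ (Fin d)))))).card :=
        Finset.card_le_card hsub
      _ ≤ ∑ A ∈ 𝒜, (T.filter
          (fun p => p ∈ affineSpan ℝ (A : Set (EuclideanSpace ℝ (Fin d))))).card :=
        Finset.card_biUnion_le
      _ ≤ ∑ _A ∈ 𝒜, d := Finset.sum_le_sum hper
      _ = 𝒜.card * d := by rw [Finset.sum_const, smul_eq_mul]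
      _ = d * Nat.choose (k - 1) d := by
          rw [h𝒜, Finset.card_powersetCard, hScard, Nat.mul_comm]
  -- pick a good point
  have hgood : (T \ Bad).Nonempty := by
    rw [← Finset.card_pos]
    have hBT : Bad ⊆ T := Finset.filter_subset _ T
    have := Finset.card_sdiff_of_subset hBT
    omega
  obtain ⟨p, hp⟩ := hgood
  rw [Finset.mem_sdiff] at hp
  obtain ⟨hpT, hpBad⟩ := hp
  have hpNoSpan : ∀ A : Finset (EuclideanSpace ℝ (Fin d)), A ⊆ S → A.card = d →
      p ∉ affineSpan ℝ (A : Set (EuclideanSpace ℝ (Fin d))) := by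
    intro A hAS hAcard hmem
    exact hpBad (Finset.mem_filter.2 ⟨hpT,
      A, Finset.mem_powersetCard.2 ⟨hAS, hAcard⟩, hmem⟩)
  refine ⟨p, hpT, ?_⟩
  by_cases hpS : p ∈ S
  · rw [Finset.insert_eq_self.2 hpS]
    exact hS
  intro A' hA'sub hA'card
  by_cases hpA' : p ∈ A'
  · -- A' = insert p (A'.erase p)
    set A := A'.erase p with hAdef
    have hAS : A ⊆ S := by
      intro x hx
      rw [hAdef, Finset.mem_erase] at hx
      rcases Finset.mem_insert.1 (hA'sub hx.2) with h | h
      · exact absurd h hx.1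
      · exact h
    have hAcard : A.card ≤ d := by
      rw [hAdef, Finset.card_erase_of_mem hpA']
      omega
    -- extend A to B of card d inside S
    obtain ⟨B, hAB, hBS, hBcard⟩ :=
      Finset.exists_subsuperset_card_eq hAS hAcard (by omega)
    have hpB : p ∉ affineSpan ℝ (B : Set (EuclideanSpace ℝ (Fin d))) :=
      hpNoSpan B hBS hBcard
    have hpA : p ∉ affineSpan ℝ (A : Set (EuclideanSpace ℝ (Fin d))) := fun hmem =>
      hpB (affineSpan_mono ℝ (Finset.coe_subset.2 hAB) hmem)
    have hAne : p ∉ A := Finset.notMem_erase p A'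
    have hAAI : AffineIndependent ℝ (fun x : A => (x : EuclideanSpace ℝ (Fin d))) :=
      hS A hAS (by omega)
    have hA'eq : A' = insert p A := (Finset.insert_erase hpA').symm
    rw [hA'eq]
    exact aux_insert_ai A p hAne hAAI hpA
  · exact hS A' (fun x hx => by
      rcases Finset.mem_insert.1 (hA'sub hx) with h | h
      · exact absurd (h ▸ hx) hpA'
      · exact h) (by omega)
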